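/- Let ρ be a nonnegative initial mass configuration on ℤ² with finite total mass and bounded support, and let T₁ and T₂ be two legal toppling schemes for ρ, with limiting configurations ν^{T₁}, ν^{T₂} and limiting emitted-mass functions u^{T₁}, u^{T₂}. Then ν^{T₁} = ν^{T₂} and u^{T₁} = u^{T₂} (the divisible sandpile is Abelian). -/
import Mathlib


open MeasureTheory Filter Metric Real
open scoped Topology ENNReal

noncomputable section

namespace TruncatedSandpile

/-- The plane `ℝ²` with the Euclidean norm. -/
abbrev R2 : Type := EuclideanSpace ℝ (Fin 2)

/-- The Euclidean inner product `θ · x` on `ℝ²`. -/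
def dotp (θ x : R2) : ℝ := @inner ℝ _ _ θ x

/-- The point of the rescaled lattice `(1/n)ℤ²` corresponding to `z ∈ ℤ²`. -/
def pt (n : ℕ) (z : ℤ × ℤ) : R2 :=
  (WithLp.equiv 2 (Fin 2 → ℝ)).symm ![(z.1 : ℝ) / n, (z.2 : ℝ) / n]

/-- The square `y + [-1/(2n), 1/(2n)]²`. -/
def latSq (n : ℕ) (y : R2) : Set R2 :=
  {x : R2 | ∀ i : Fin 2, |x i - y i| ≤ 1 / (2 * (n : ℝ))}

/-- `F_n(y) = n² · μ(y^□ ∩ (B_M \ B_{r/n}))`. -/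
def Fn (r M : ℝ) (n : ℕ) (y : R2) : ℝ :=
  (n : ℝ) ^ 2 * (volume (latSq n y ∩ (ball (0 : R2) M \ ball 0 (r / n)))).toReal

/-- The constant `k_n`. -/
def kn (α r M : ℝ) (n : ℕ) : ℝ :=
  (n : ℝ) ^ (2 - α) / 4 *
    ((∫ y in ball (0 : R2) M, ‖y‖ ^ (-α)) -
      ((n : ℝ) ^ 2)⁻¹ * ∑' z : ℤ × ℤ, if z ≠ 0 then Fn r M n (pt n z) / ‖pt n z‖ ^ α else 0)

/-- The unnormalized jump weights defining `p_n`. -/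
def pnRaw (α r M : ℝ) (n : ℕ) (z : ℤ × ℤ) : ℝ :=
  if z = 0 then 0 else
    kn α r M n * (if ‖pt n z‖ = 1 / n then 1 else 0) +
      Fn r M n (pt n z) / ((n : ℝ) ^ (2 + α) * ‖pt n z‖ ^ (2 + α))

/-- The normalizing constant `c_n`, making `p_n` a probability. -/
def cseq (α r M : ℝ) (n : ℕ) : ℝ := (∑' z : ℤ × ℤ, pnRaw α r M n z)⁻¹

/-- The jump probability `p_n` on `(1/n)ℤ²` (indexed by `ℤ²`). -/
def pn (α r M : ℝ) (n : ℕ) (z : ℤ × ℤ) : ℝ := cseq α r M n * pnRaw α r M n z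

/-- `c = lim_{n→∞} c_n`. -/
def climit (α r M : ℝ) : ℝ := limUnder atTop (cseq α r M)

/-- `ψ_M(θ) = cc ∫_{B_M} (1 - cos(θ·y))/|y|^{2+α} dy`. -/
def psiM (α M cc : ℝ) (θ : R2) : ℝ :=
  cc * ∫ y in ball (0 : R2) M, (1 - Real.cos (dotp θ y)) / ‖y‖ ^ (2 + α)

/-- `ψ_{M,n}(θ) = n^α Σ_y p_n(y)(1 - cos(θ·y))`. -/
def psiMn (α r M : ℝ) (n : ℕ) (θ : R2) : ℝ :=
  (n : ℝ) ^ α * ∑' z : ℤ × ℤ, pn α r M n z * (1 - Real.cos (dotp θ (pt n z)))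

/-- The continuous Green's function `G_M` (with constant `cc` and base point `x₀`). -/
def GM (α M cc : ℝ) (x₀ x : R2) : ℝ :=
  (1 / (2 * π) ^ 2) *
    ∫ θ : R2, (Real.cos (dotp θ x) - Real.cos (dotp θ x₀)) / psiM α M cc θ

/-- The box `[-nπ, nπ]²`. -/
def box (n : ℕ) : Set R2 := {θ : R2 | ∀ i : Fin 2, |θ i| ≤ (n : ℝ) * π}

/-- The rescaled discrete Green's function `G_{M,n}`. -/
def GMn (α r M : ℝ) (n : ℕ) (x₀ x : R2) : ℝ :=
  (1 / (2 * π) ^ 2) *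
    ∫ θ in box n, (Real.cos (dotp θ x) - Real.cos (dotp θ x₀)) / psiMn α r M n θ

/-- `σ_M² = cc ∫_{B_M} |y|^{-α} dy`. -/
def sigmaM2 (α M cc : ℝ) : ℝ := cc * ∫ y in ball (0 : R2) M, ‖y‖ ^ (-α)

/-- `σ_{M,n}² = n^α Σ_y p_n(y)|y|²`. -/
def sigmaMn2 (α r M : ℝ) (n : ℕ) : ℝ :=
  (n : ℝ) ^ α * ∑' z : ℤ × ℤ, pn α r M n z * ‖pt n z‖ ^ 2

/-- The truncated fractional Laplacian `L_M` (with constant `cc`). -/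
def LM (α M cc : ℝ) (f : R2 → ℝ) (x : R2) : ℝ :=
  cc / 2 * ∫ y in ball (0 : R2) M, (f (x + y) + f (x - y) - 2 * f x) / ‖y‖ ^ (2 + α)

/-- The discrete operator `L_{M,n}` acting on lattice functions `g : ℤ² → ℝ`. -/
def LMnD (α r M : ℝ) (n : ℕ) (g : ℤ × ℤ → ℝ) (z : ℤ × ℤ) : ℝ :=
  (n : ℝ) ^ α * ∑' w : ℤ × ℤ, pn α r M n w * (g (z + w) - g z)

/-- The discrete operator `L_{M,n}` acting on functions on `ℝ²`. -/
def LMnF (α r M : ℝ) (n : ℕ) (f : R2 → ℝ) (x : R2) : ℝ :=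
  (n : ℝ) ^ α * ∑' w : ℤ × ℤ, pn α r M n w * (f (x + pt n w) - f x)

/-- The continuous obstacle `γ`. -/
def gammaC (α M cc : ℝ) (x₀ : R2) (ρ : R2 → ℝ) (x : R2) : ℝ :=
  -‖x‖ ^ 2 / sigmaM2 α M cc - ∫ y : R2, GM α M cc x₀ (x - y) * ρ y

/-- The discrete obstacle `γ_n` (as a function on `ℤ²`, representing `(1/n)ℤ²`). -/
def gammaD (α r M : ℝ) (n : ℕ) (x₀ : R2) (ρ : R2 → ℝ) (z : ℤ × ℤ) : ℝ :=
  -‖pt n z‖ ^ 2 / sigmaMn2 α r M n -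
    ((n : ℝ) ^ 2)⁻¹ * ∑' w : ℤ × ℤ, GMn α r M n x₀ (pt n z - pt n w) * ρ (pt n w)

/-- `f ∈ L¹_loc` is superharmonic w.r.t. `L_M` on an open set `Ω` if
`∫ f · L_M φ ≤ 0` for all nonnegative smooth compactly supported `φ` with support in `Ω`. -/
def Superharmonic (α M cc : ℝ) (f : R2 → ℝ) (Ω : Set R2) : Prop :=
  ∀ φ : R2 → ℝ, ContDiff ℝ (⊤ : ℕ∞) φ → HasCompactSupport φ → (∀ x, 0 ≤ φ x) →
    tsupport φ ⊆ Ω → (∫ x : R2, f x * LM α M cc φ x) ≤ 0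

/-- The least superharmonic majorant `s` of the continuous obstacle. -/
def sMaj (α M cc : ℝ) (x₀ : R2) (ρ : R2 → ℝ) (x : R2) : ℝ :=
  sInf {v : ℝ | ∃ f : R2 → ℝ, Continuous f ∧ Superharmonic α M cc f Set.univ ∧
    (∀ y, gammaC α M cc x₀ ρ y ≤ f y) ∧ v = f x}

/-- The discrete majorant `s_n` of the discrete obstacle. -/
def sMajD (α r M : ℝ) (n : ℕ) (x₀ : R2) (ρ : R2 → ℝ) (z : ℤ × ℤ) : ℝ :=
  sInf {v : ℝ | ∃ f : ℤ × ℤ → ℝ, (∀ w, LMnD α r M n f w ≤ 0) ∧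
    (∀ w, gammaD α r M n x₀ ρ w ≤ f w) ∧ v = f z}

/-- The discrete odometer `u_n = s_n - γ_n`. -/
def uD (α r M : ℝ) (n : ℕ) (x₀ : R2) (ρ : R2 → ℝ) (z : ℤ × ℤ) : ℝ :=
  sMajD α r M n x₀ ρ z - gammaD α r M n x₀ ρ z

/-- The discrete final distribution `ν_n = ρ_n + L_{M,n} u_n`. -/
def nuD (α r M : ℝ) (n : ℕ) (x₀ : R2) (ρ : R2 → ℝ) (z : ℤ × ℤ) : ℝ :=
  ρ (pt n z) + LMnD α r M n (uD α r M n x₀ ρ) z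

/-- The lattice point `x^{::}` of `(1/n)ℤ²` whose half-open square
`(x^{::} - 1/(2n), x^{::} + 1/(2n)]²` contains `x` (ties broken to the right). -/
def nearPt (n : ℕ) (x : R2) : ℤ × ℤ := (⌈(n : ℝ) * x 0 - 1 / 2⌉, ⌈(n : ℝ) * x 1 - 1 / 2⌉)

/-- The extension `g^□` of a lattice function `g` to `ℝ²`: `g^□(x) = g(x^{::})`. -/
def extQ (n : ℕ) (g : ℤ × ℤ → ℝ) (x : R2) : ℝ := g (nearPt n x)

/-- The constant `β_n = (2/(π σ_M²))(c/c_n - 1)`. -/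
def betan (α r M : ℝ) (n : ℕ) : ℝ :=
  2 / (π * sigmaM2 α M (climit α r M)) * (climit α r M / cseq α r M n - 1)

/-- The auxiliary function `h_M(x) = (1/(π²σ_M²)) ∫_{B_{|x|/M} \ B₁} cos(θ·ω)/|θ|² dθ`. -/
def hM (α M cc : ℝ) (ω x : R2) : ℝ :=
  1 / (π ^ 2 * sigmaM2 α M cc) *
    ∫ θ in ball (0 : R2) (‖x‖ / M) \ ball 0 1, Real.cos (dotp θ ω) / ‖θ‖ ^ 2

/-- Toppling the (full) site `x`: `x` keeps mass 1 and distributes the excess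
according to `p₁`. -/
def topple (α r M : ℝ) (m : ℤ × ℤ → ℝ) (x : ℤ × ℤ) : ℤ × ℤ → ℝ :=
  fun y => if y = x then 1 else m y + (m x - 1) * pn α r M 1 (y - x)

/-- The mass configuration after the first `k` topplings of the scheme `T`,
started from `ρ`. -/
def conf (α r M : ℝ) (ρ : ℤ × ℤ → ℝ) (T : ℕ → ℤ × ℤ) : ℕ → ℤ × ℤ → ℝ
  | 0 => ρ
  | k + 1 => topple α r M (conf α r M ρ T k) (T k)

/-- The total mass emitted from each site during the first `k` topplings. -/
def emitted (α r M : ℝ) (ρ : ℤ × ℤ → ℝ) (T : ℕ → ℤ × ℤ) : ℕ → ℤ × ℤ → ℝ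
  | 0 => fun _ => 0
  | k + 1 => fun y =>
      emitted α r M ρ T k y + if y = T k then conf α r M ρ T k y - 1 else 0

/-- A legal toppling scheme: only full sites are toppled, and every site that is
full at some stage is toppled infinitely often afterwards. -/
def LegalScheme (α r M : ℝ) (ρ : ℤ × ℤ → ℝ) (T : ℕ → ℤ × ℤ) : Prop :=
  (∀ k, 1 ≤ conf α r M ρ T k (T k)) ∧
  (∀ k x, 1 ≤ conf α r M ρ T k x → ∀ N, ∃ j, N ≤ j ∧ T j = x)



section AbelianAux

variable (α r M : ℝ)

lemma pn_zero' (n : ℕ) : pn α r M n 0 = 0 := by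
  simp [pn, pnRaw]

lemma Fn_nonneg' (n : ℕ) (y : R2) : 0 ≤ Fn r M n y :=
  mul_nonneg (by positivity) ENNReal.toReal_nonneg

lemma pnRaw_nonneg' (n : ℕ) (hk : 0 ≤ kn α r M n) (z : ℤ × ℤ) :
    0 ≤ pnRaw α r M n z := by
  unfold pnRaw
  split
  · exact le_rfl
  · refine add_nonneg (mul_nonneg hk (by split <;> norm_num)) ?_
    refine div_nonneg (Fn_nonneg' r M n _) ?_
    exact mul_nonneg (Real.rpow_nonneg (Nat.cast_nonneg n) _)
      (Real.rpow_nonneg (norm_nonneg _) _)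

lemma pn_nonneg' (n : ℕ) (hk : 0 ≤ kn α r M n) (z : ℤ × ℤ) :
    0 ≤ pn α r M n z := by
  refine mul_nonneg ?_ (pnRaw_nonneg' α r M n hk z)
  unfold cseq
  exact inv_nonneg.2 (tsum_nonneg fun w => pnRaw_nonneg' α r M n hk w)

lemma emitted_eq_zero' (ρ : ℤ × ℤ → ℝ) (T : ℕ → ℤ × ℤ) :
    ∀ k w, w ∉ (Finset.range k).image T → emitted α r M ρ T k w = 0 := by
  intro k
  induction k with
  | zero => intro w _; rfl
  | succ k ih =>
    intro w hw
    have h1 : w ∉ (Finset.range k).image T := fun h =>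
      hw (Finset.image_subset_image (Finset.range_subset_range.2 (Nat.le_succ k)) h)
    have h2 : w ≠ T k := fun h =>
      hw (Finset.mem_image.2 ⟨k, Finset.self_mem_range_succ k, h.symm⟩)
    simp [emitted, ih w h1, h2]

lemma summable_emitted' (ρ : ℤ × ℤ → ℝ) (T : ℕ → ℤ × ℤ) (k : ℕ) (f : ℤ × ℤ → ℝ) :
    Summable (fun w => emitted α r M ρ T k w * f w) :=
  summable_of_ne_finset_zero (s := (Finset.range k).image T) fun w hw => by
    rw [emitted_eq_zero' α r M ρ T k w hw, zero_mul]

lemma conf_eq' (ρ : ℤ × ℤ → ℝ) (T : ℕ → ℤ × ℤ) :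
    ∀ k y, conf α r M ρ T k y =
      ρ y - emitted α r M ρ T k y
        + ∑' w, emitted α r M ρ T k w * pn α r M 1 (y - w) := by
  intro k
  induction k with
  | zero => intro y; simp [conf, emitted]
  | succ k ih =>
    intro y
    have h1 : ∀ w, emitted α r M ρ T (k + 1) w * pn α r M 1 (y - w)
        = emitted α r M ρ T k w * pn α r M 1 (y - w)
          + (if w = T k then (conf α r M ρ T k (T k) - 1) * pn α r M 1 (y - T k)
              else 0) := by
      intro w
      by_cases hw : w = T k
      · subst hw; simp [emitted, add_mul]
      · simp [emitted, hw]
    have hts : (∑' w, emitted α r M ρ T (k + 1) w * pn α r M 1 (y - w))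
        = (∑' w, emitted α r M ρ T k w * pn α r M 1 (y - w))
          + (conf α r M ρ T k (T k) - 1) * pn α r M 1 (y - T k) := by
      rw [tsum_congr h1,
        Summable.tsum_add (summable_emitted' α r M ρ T k _)
          (summable_of_ne_finset_zero (s := {T k}) (by
            intro b hb
            simp only [Finset.mem_singleton] at hb
            simp [hb])),
        tsum_ite_eq]
    by_cases hy : y = T k
    · subst hy
      have hc : conf α r M ρ T (k + 1) (T k) = 1 := by simp [conf, topple]
      have hE : emitted α r M ρ T (k + 1) (T k)
          = emitted α r M ρ T k (T k) + (conf α r M ρ T k (T k) - 1) := by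
        simp [emitted]
      have hp0 : pn α r M 1 (T k - T k) = 0 := by
        rw [sub_self, pn_zero']
      rw [hc, hts, hE, hp0, mul_zero, add_zero]
      have hih := ih (T k)
      linarith
    · have hc : conf α r M ρ T (k + 1) y
          = conf α r M ρ T k y
            + (conf α r M ρ T k (T k) - 1) * pn α r M 1 (y - T k) := by
        simp [conf, topple, hy]
      have hE : emitted α r M ρ T (k + 1) y = emitted α r M ρ T k y := by
        simp [emitted, hy]
      rw [hc, hts, hE]
      have hih := ih y
      linarith

lemma emitted_mono' (ρ : ℤ × ℤ → ℝ) (T : ℕ → ℤ × ℤ)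
    (hT : LegalScheme α r M ρ T) (w : ℤ × ℤ) :
    Monotone fun k => emitted α r M ρ T k w := by
  refine monotone_nat_of_le_succ fun k => ?_
  by_cases hw : w = T k
  · subst hw
    have h := hT.1 k
    have hE : emitted α r M ρ T (k + 1) (T k)
        = emitted α r M ρ T k (T k) + (conf α r M ρ T k (T k) - 1) := by
      simp [emitted]
    rw [hE]
    linarith
  · simp [emitted, hw]

lemma emitted_nonneg' (ρ : ℤ × ℤ → ℝ) (T : ℕ → ℤ × ℤ)
    (hT : LegalScheme α r M ρ T) (k : ℕ) (w : ℤ × ℤ) :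
    0 ≤ emitted α r M ρ T k w := by
  have h := emitted_mono' α r M ρ T hT w (Nat.zero_le k)
  simpa [emitted] using h

lemma emitted_le_limit' (ρ : ℤ × ℤ → ℝ) (T : ℕ → ℤ × ℤ)
    (hT : LegalScheme α r M ρ T) (u : ℤ × ℤ → ℝ)
    (hu : ∀ x, Tendsto (fun k => emitted α r M ρ T k x) atTop (𝓝 (u x)))
    (k : ℕ) (w : ℤ × ℤ) :
    emitted α r M ρ T k w ≤ u w :=
  (emitted_mono' α r M ρ T hT w).ge_of_tendsto (hu w) k

lemma limit_nonneg' (ρ : ℤ × ℤ → ℝ) (T : ℕ → ℤ × ℤ)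
    (hT : LegalScheme α r M ρ T) (u : ℤ × ℤ → ℝ)
    (hu : ∀ x, Tendsto (fun k => emitted α r M ρ T k x) atTop (𝓝 (u x)))
    (w : ℤ × ℤ) : 0 ≤ u w :=
  le_trans (emitted_nonneg' α r M ρ T hT 0 w) (emitted_le_limit' α r M ρ T hT u hu 0 w)

lemma nu_le_one' (ρ : ℤ × ℤ → ℝ) (T : ℕ → ℤ × ℤ)
    (hT : LegalScheme α r M ρ T) (ν : ℤ × ℤ → ℝ)
    (hν : ∀ x, Tendsto (fun k => conf α r M ρ T k x) atTop (𝓝 (ν x)))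
    (y : ℤ × ℤ) : ν y ≤ 1 := by
  by_contra h
  push_neg at h
  have hev : ∀ᶠ k in atTop, 1 < conf α r M ρ T k y :=
    (hν y).eventually (eventually_gt_nhds h)
  obtain ⟨K, hK⟩ := eventually_atTop.1 hev
  obtain ⟨j, hjK, hjy⟩ := hT.2 K y (le_of_lt (hK K le_rfl)) K
  have h1 : conf α r M ρ T (j + 1) y = 1 := by
    subst hjy; simp [conf, topple]
  have h2 : 1 < conf α r M ρ T (j + 1) y := hK (j + 1) (le_trans hjK (Nat.le_succ j))
  rw [h1] at h2
  exact lt_irrefl 1 h2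

lemma limit_identity' (hk : 0 < kn α r M 1) (ρ : ℤ × ℤ → ℝ) (T : ℕ → ℤ × ℤ)
    (hT : LegalScheme α r M ρ T) (ν u : ℤ × ℤ → ℝ)
    (hν : ∀ x, Tendsto (fun k => conf α r M ρ T k x) atTop (𝓝 (ν x)))
    (hu : ∀ x, Tendsto (fun k => emitted α r M ρ T k x) atTop (𝓝 (u x)))
    (y : ℤ × ℤ) :
    Summable (fun w => u w * pn α r M 1 (y - w)) ∧
      (∑' w, u w * pn α r M 1 (y - w)) = ν y - ρ y + u y := by
  have hp : ∀ z, 0 ≤ pn α r M 1 z := pn_nonneg' α r M 1 hk.le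
  have hSk : ∀ k, (∑' w, emitted α r M ρ T k w * pn α r M 1 (y - w))
      = conf α r M ρ T k y - ρ y + emitted α r M ρ T k y := by
    intro k
    have := conf_eq' α r M ρ T k y
    linarith
  have hSt : Tendsto (fun k => ∑' w, emitted α r M ρ T k w * pn α r M 1 (y - w))
      atTop (𝓝 (ν y - ρ y + u y)) := by
    have : Tendsto (fun k => conf α r M ρ T k y - ρ y + emitted α r M ρ T k y)
        atTop (𝓝 (ν y - ρ y + u y)) := ((hν y).sub_const (ρ y)).add (hu y)
    exact this.congr fun k => (hSk k).symm
  have hmonoS : Monotone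
      (fun k => ∑' w, emitted α r M ρ T k w * pn α r M 1 (y - w)) := by
    intro a b hab
    exact Summable.tsum_le_tsum
      (fun w => mul_le_mul_of_nonneg_right (emitted_mono' α r M ρ T hT w hab) (hp _))
      (summable_emitted' α r M ρ T a _) (summable_emitted' α r M ρ T b _)
  have hSkS : ∀ k, (∑' w, emitted α r M ρ T k w * pn α r M 1 (y - w))
      ≤ ν y - ρ y + u y := hmonoS.ge_of_tendsto hSt
  have hF : ∀ F : Finset (ℤ × ℤ),
      (∑ w ∈ F, u w * pn α r M 1 (y - w)) ≤ ν y - ρ y + u y := by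
    intro F
    have h1 : Tendsto (fun k => ∑ w ∈ F, emitted α r M ρ T k w * pn α r M 1 (y - w))
        atTop (𝓝 (∑ w ∈ F, u w * pn α r M 1 (y - w))) :=
      tendsto_finset_sum _ fun w _ => (hu w).mul_const _
    refine le_of_tendsto h1 (Eventually.of_forall fun k => ?_)
    refine le_trans (Summable.sum_le_tsum F
      (fun w _ => mul_nonneg (emitted_nonneg' α r M ρ T hT k w) (hp _))
      (summable_emitted' α r M ρ T k _)) (hSkS k)
  have h0 : ∀ w, 0 ≤ u w * pn α r M 1 (y - w) := fun w =>
    mul_nonneg (limit_nonneg' α r M ρ T hT u hu w) (hp _)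
  have hsum : Summable (fun w => u w * pn α r M 1 (y - w)) :=
    summable_of_sum_le h0 hF
  refine ⟨hsum, le_antisymm (Summable.tsum_le_of_sum_le hsum hF) ?_⟩
  refine le_of_tendsto hSt (Eventually.of_forall fun k => ?_)
  exact Summable.tsum_le_tsum
    (fun w => mul_le_mul_of_nonneg_right (emitted_le_limit' α r M ρ T hT u hu k w) (hp _))
    (summable_emitted' α r M ρ T k _) hsum

lemma emitted_le_other' (hk : 0 < kn α r M 1) (ρ : ℤ × ℤ → ℝ)
    (Ta Tb : ℕ → ℤ × ℤ) (hTa : LegalScheme α r M ρ Ta) (hTb : LegalScheme α r M ρ Tb)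
    (νb ub : ℤ × ℤ → ℝ)
    (hνb : ∀ x, Tendsto (fun k => conf α r M ρ Tb k x) atTop (𝓝 (νb x)))
    (hub : ∀ x, Tendsto (fun k => emitted α r M ρ Tb k x) atTop (𝓝 (ub x))) :
    ∀ k x, emitted α r M ρ Ta k x ≤ ub x := by
  have hp : ∀ z, 0 ≤ pn α r M 1 z := pn_nonneg' α r M 1 hk.le
  intro k
  induction k with
  | zero =>
    intro x
    simpa [emitted] using limit_nonneg' α r M ρ Tb hTb ub hub x
  | succ k ih =>
    intro x
    by_cases hx : x = Ta k
    · subst hx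
      have hE : emitted α r M ρ Ta (k + 1) (Ta k)
          = emitted α r M ρ Ta k (Ta k) + (conf α r M ρ Ta k (Ta k) - 1) := by
        simp [emitted]
      have hce := conf_eq' α r M ρ Ta k (Ta k)
      obtain ⟨hsum, hval⟩ :=
        limit_identity' α r M hk ρ Tb hTb νb ub hνb hub (Ta k)
      have hcomp : (∑' w, emitted α r M ρ Ta k w * pn α r M 1 (Ta k - w))
          ≤ ∑' w, ub w * pn α r M 1 (Ta k - w) :=
        Summable.tsum_le_tsum (fun w => mul_le_mul_of_nonneg_right (ih w) (hp _))
          (summable_emitted' α r M ρ Ta k _) hsum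
      have hnu : νb (Ta k) ≤ 1 := nu_le_one' α r M ρ Tb hTb νb hνb (Ta k)
      rw [hE]
      rw [hval] at hcomp
      linarith
    · have hE : emitted α r M ρ Ta (k + 1) x = emitted α r M ρ Ta k x := by
        simp [emitted, hx]
      rw [hE]; exact ih x

end AbelianAux

/-- **Abelian property** of the truncated α-stable divisible sandpile: the limiting
configuration and odometer do not depend on the legal toppling scheme. -/
theorem sandpile_abelian
    (α r M : ℝ) (hα : α ∈ Set.Ioo (1 : ℝ) 2) (hr : 0 < r) (hrM : r < M)
    (hk : 0 < kn α r M 1)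
    (ρ : ℤ × ℤ → ℝ) (hρ0 : ∀ x, 0 ≤ ρ x) (hρfin : (Function.support ρ).Finite)
    (T₁ T₂ : ℕ → ℤ × ℤ) (hT₁ : LegalScheme α r M ρ T₁) (hT₂ : LegalScheme α r M ρ T₂)
    (ν₁ u₁ ν₂ u₂ : ℤ × ℤ → ℝ)
    (hν₁ : ∀ x, Tendsto (fun k => conf α r M ρ T₁ k x) atTop (𝓝 (ν₁ x)))
    (hu₁ : ∀ x, Tendsto (fun k => emitted α r M ρ T₁ k x) atTop (𝓝 (u₁ x)))
    (hν₂ : ∀ x, Tendsto (fun k => conf α r M ρ T₂ k x) atTop (𝓝 (ν₂ x)))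
    (hu₂ : ∀ x, Tendsto (fun k => emitted α r M ρ T₂ k x) atTop (𝓝 (u₂ x))) :
    ν₁ = ν₂ ∧ u₁ = u₂ := by
  have h12 : ∀ x, u₁ x ≤ u₂ x := by
    intro x
    refine le_of_tendsto (hu₁ x) (Eventually.of_forall fun k => ?_)
    exact emitted_le_other' α r M hk ρ T₁ T₂ hT₁ hT₂ ν₂ u₂ hν₂ hu₂ k x
  have h21 : ∀ x, u₂ x ≤ u₁ x := by
    intro x
    refine le_of_tendsto (hu₂ x) (Eventually.of_forall fun k => ?_)
    exact emitted_le_other' α r M hk ρ T₂ T₁ hT₂ hT₁ ν₁ u₁ hν₁ hu₁ k x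
  have hu : u₁ = u₂ := funext fun x => le_antisymm (h12 x) (h21 x)
  refine ⟨funext fun y => ?_, hu⟩
  obtain ⟨hs1, hv1⟩ := limit_identity' α r M hk ρ T₁ hT₁ ν₁ u₁ hν₁ hu₁ y
  obtain ⟨hs2, hv2⟩ := limit_identity' α r M hk ρ T₂ hT₂ ν₂ u₂ hν₂ hu₂ y
  rw [hu] at hv1
  have := hv1.symm.trans hv2
  have hueq : u₁ y = u₂ y := congrFun hu y
  linarith


end TruncatedSandpile
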